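/- Let (V, E) be a hypergraph with non-negative hyperedge weights w, where each hyperedge e has a fixed representative r(e) ∈ e, and let f(A) = Σ_{e : r(e) ∈ A, e ⊄ A} w(e). Let s_1, …, s_k ∈ V be distinct terminals and let x be a fractional allocation on V with x(s_i,i) = 1 for each i. Then there exists a partition (A_1, …, A_k) of V with s_i ∈ A_i for each i such that the total weight of hyperedges not entirely contained in a single part is at most 2(1 − 1/k) · Σ_{i=1}^k f̂(x_i). In particular, the integrality gap of the Lovász-extension relaxation for hypergraph multiway cut is at most 2(1 − 1/k). -/

import Mathlib

open scoped BigOperators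

/-- The Lovász extension `f̂(x) = ∫₀¹ f(x^θ) dθ`, where
`x^θ = {v ∈ V : x(v) ≥ θ}`. -/
noncomputable def lovasz {V : Type*} [Fintype V] (f : Finset V → ℝ) (x : V → ℝ) : ℝ :=
  ∫ θ in (0:ℝ)..1, f (Finset.univ.filter (fun v => θ ≤ x v))

/-- The hypergraph separation cost function with representatives `r`:
`f(A) = ∑_{e : r(e) ∈ A, e ⊄ A} w(e)`. -/
noncomputable def hypergraphSep {V : Type*} [DecidableEq V]
    (E : Finset (Finset V)) (w : Finset V → ℝ) (r : Finset V → V) (A : Finset V) : ℝ :=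
  ∑ e ∈ E.filter (fun e => r e ∈ A ∧ ¬ e ⊆ A), w e

open MeasureTheory Set

section Helpers

lemma indIoc_intervalIntegrable (p q C u v : ℝ) :
    IntervalIntegrable ((Set.Ioc p q).indicator (fun _ => C)) volume u v := by
  apply MeasureTheory.Integrable.intervalIntegrable
  rw [MeasureTheory.integrable_indicator_iff measurableSet_Ioc]
  exact integrableOn_const measure_Ioc_lt_top.ne

lemma indIoc_integrable (p q C : ℝ) :
    MeasureTheory.Integrable ((Set.Ioc p q).indicator (fun _ => C)) volume := by
  rw [MeasureTheory.integrable_indicator_iff measurableSet_Ioc]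
  exact integrableOn_const measure_Ioc_lt_top.ne

lemma intIndIoc (p q C u v : ℝ) (huv : u ≤ v) :
    ∫ θ in u..v, (Set.Ioc p q).indicator (fun _ => C) θ = max 0 (min q v - max p u) * C := by
  rw [intervalIntegral.integral_of_le huv,
    MeasureTheory.setIntegral_indicator measurableSet_Ioc,
    Set.Ioc_inter_Ioc, setIntegral_const, Real.volume_real_Ioc, smul_eq_mul]
  congr 1
  rw [max_comm, min_comm q v, max_comm p u]

lemma core_ineq {k : ℕ} (hk : 2 ≤ k) (β a b : Fin k → ℝ) (D : ℝ)
    (hD : 0 ≤ D)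
    (hβ0 : ∀ j, 0 ≤ β j)
    (hsum : ∑ j, β j ≤ 1 - D)
    (hab : ∀ ℓ, a ℓ ≤ D + b ℓ)
    (hbq : ∀ ℓ, ∃ q, q ≠ ℓ ∧ b ℓ ≤ β q) :
    ∑ ℓ, max 0 (a ℓ - max (b ℓ) 2⁻¹) ≤ ((k : ℝ) - 1) * D := by
  obtain ⟨p, -, hp⟩ := Finset.exists_max_image Finset.univ β ⟨⟨0, by omega⟩, Finset.mem_univ _⟩
  have hp' : ∀ j, β j ≤ β p := fun j => hp j (Finset.mem_univ j)
  have hbβ : ∀ ℓ, b ℓ ≤ β p := by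
    intro ℓ; obtain ⟨q, -, hq⟩ := hbq ℓ; exact hq.trans (hp' q)
  have hpair : ∀ q, q ≠ p → β p + β q ≤ 1 - D := by
    intro q hq
    have h : β p + β q = ∑ j ∈ ({p, q} : Finset (Fin k)), β j := by
      rw [Finset.sum_pair (Ne.symm hq)]
    calc β p + β q = ∑ j ∈ ({p, q} : Finset (Fin k)), β j := h
      _ ≤ ∑ j, β j := Finset.sum_le_sum_of_subset_of_nonneg (Finset.subset_univ _)
          (fun j _ _ => hβ0 j)
      _ ≤ 1 - D := hsum
  have htD : ∀ ℓ, max 0 (a ℓ - max (b ℓ) 2⁻¹) ≤ D := by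
    intro ℓ
    have h1 := hab ℓ
    have h2 : b ℓ ≤ max (b ℓ) 2⁻¹ := le_max_left _ _
    simp only [max_le_iff]
    constructor <;> linarith
  have htb : ∀ ℓ c, b ℓ ≤ c → max 0 (a ℓ - max (b ℓ) 2⁻¹) ≤ max 0 (c + D - 2⁻¹) := by
    intro ℓ c hc
    have h1 := hab ℓ
    have h2 : (2:ℝ)⁻¹ ≤ max (b ℓ) 2⁻¹ := le_max_right _ _
    apply max_le (le_max_left _ _)
    have h : a ℓ - max (b ℓ) 2⁻¹ ≤ c + D - 2⁻¹ := by linarith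
    exact h.trans (le_max_right _ _)
  have hsplit : ∑ ℓ, max 0 (a ℓ - max (b ℓ) 2⁻¹)
      = max 0 (a p - max (b p) 2⁻¹) + ∑ ℓ ∈ Finset.univ.erase p, max 0 (a ℓ - max (b ℓ) 2⁻¹) :=
    (Finset.add_sum_erase _ _ (Finset.mem_univ p)).symm
  have hcard : (Finset.univ.erase p).card = k - 1 := by
    rw [Finset.card_erase_of_mem (Finset.mem_univ p), Finset.card_univ, Fintype.card_fin]
  have hkR : (2 : ℝ) ≤ (k : ℝ) := by exact_mod_cast hk
  have hkm1 : ((k - 1 : ℕ) : ℝ) = (k : ℝ) - 1 := by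
    have h : 1 ≤ k := by omega
    push_cast [h]; ring
  rcases le_or_gt (β p + D) 2⁻¹ with hcase | hcase
  · have hz : ∀ ℓ, max 0 (a ℓ - max (b ℓ) 2⁻¹) ≤ 0 := by
      intro ℓ
      have h := htb ℓ (β p) (hbβ ℓ)
      have h0 : max 0 (β p + D - 2⁻¹) = 0 := by
        apply max_eq_left; linarith
      linarith [h, h0.le]
    calc ∑ ℓ, max 0 (a ℓ - max (b ℓ) 2⁻¹) ≤ ∑ _ℓ : Fin k, (0:ℝ) :=
        Finset.sum_le_sum (fun ℓ _ => hz ℓ)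
      _ = 0 := by simp
      _ ≤ ((k:ℝ) - 1) * D := by nlinarith
  · rcases le_or_gt 2⁻¹ (β p) with hc2 | hc2
    · obtain ⟨q, hqp, hq⟩ := hbq p
      have hβq : β q ≤ 1 - D - β p := by have := hpair q hqp; linarith
      have hterm_p : max 0 (a p - max (b p) 2⁻¹) ≤ 0 := by
        have h := htb p (β q) hq
        have h0 : max 0 (β q + D - 2⁻¹) = 0 := by
          apply max_eq_left; linarith
        linarith [h, h0.le]
      have hrest : ∑ ℓ ∈ Finset.univ.erase p, max 0 (a ℓ - max (b ℓ) 2⁻¹)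
          ≤ ((k:ℝ) - 1) * D := by
        calc ∑ ℓ ∈ Finset.univ.erase p, max 0 (a ℓ - max (b ℓ) 2⁻¹)
            ≤ ∑ _ℓ ∈ Finset.univ.erase p, D := Finset.sum_le_sum (fun ℓ _ => htD ℓ)
          _ = ((k:ℝ) - 1) * D := by rw [Finset.sum_const, hcard, nsmul_eq_mul, hkm1]
      linarith [hsplit]
    · obtain ⟨q, hqp, hq⟩ := hbq p
      have hβq : β q ≤ 1 - D - β p := by have := hpair q hqp; linarith
      have hterm_p : max 0 (a p - max (b p) 2⁻¹) ≤ 2⁻¹ - β p := by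
        have h1 := htb p (β q) hq
        have h2 : max 0 (β q + D - 2⁻¹) ≤ 2⁻¹ - β p := by
          apply max_le <;> linarith
        linarith
      have hrest : ∑ ℓ ∈ Finset.univ.erase p, max 0 (a ℓ - max (b ℓ) 2⁻¹)
          ≤ ((k:ℝ) - 1) * (β p + D - 2⁻¹) := by
        calc ∑ ℓ ∈ Finset.univ.erase p, max 0 (a ℓ - max (b ℓ) 2⁻¹)
            ≤ ∑ _ℓ ∈ Finset.univ.erase p, (β p + D - 2⁻¹) := by
              apply Finset.sum_le_sum
              intro ℓ _
              have h := htb ℓ (β p) (hbβ ℓ)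
              have h2 : max 0 (β p + D - 2⁻¹) = β p + D - 2⁻¹ := by
                apply max_eq_right; linarith
              linarith
          _ = ((k:ℝ) - 1) * (β p + D - 2⁻¹) := by
              rw [Finset.sum_const, hcard, nsmul_eq_mul, hkm1]
      have hfin : max 0 (a p - max (b p) 2⁻¹)
          + ∑ ℓ ∈ Finset.univ.erase p, max 0 (a ℓ - max (b ℓ) 2⁻¹)
          ≤ ((k:ℝ) - 1) * D := by nlinarith
      linarith [hsplit]

lemma erase_univ_nonempty {k : ℕ} (hk : 2 ≤ k) (ℓ : Fin k) :
    (Finset.univ.erase ℓ).Nonempty := by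
  rw [← Finset.card_pos, Finset.card_erase_of_mem (Finset.mem_univ ℓ), Finset.card_univ,
    Fintype.card_fin]
  omega

noncomputable def supErase {k : ℕ} (hk : 2 ≤ k) (g : Fin k → ℝ) (ℓ : Fin k) : ℝ :=
  (Finset.univ.erase ℓ).sup' (erase_univ_nonempty hk ℓ) g

lemma supErase_lt_iff {k : ℕ} (hk : 2 ≤ k) (g : Fin k → ℝ) (ℓ : Fin k) {θ : ℝ} :
    supErase hk g ℓ < θ ↔ ∀ j, j ≠ ℓ → g j < θ := by
  rw [supErase, Finset.sup'_lt_iff]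
  constructor
  · intro h j hj
    exact h j (Finset.mem_erase.mpr ⟨hj, Finset.mem_univ j⟩)
  · intro h j hj
    exact h j (Finset.mem_erase.mp hj).1

lemma le_supErase_iff {k : ℕ} (hk : 2 ≤ k) (g : Fin k → ℝ) (ℓ : Fin k) {θ : ℝ} :
    θ ≤ supErase hk g ℓ ↔ ∃ j, j ≠ ℓ ∧ θ ≤ g j := by
  rw [supErase, Finset.le_sup'_iff]
  constructor
  · rintro ⟨j, hj, h⟩
    exact ⟨j, (Finset.mem_erase.mp hj).1, h⟩
  · rintro ⟨j, hj, h⟩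
    exact ⟨j, Finset.mem_erase.mpr ⟨hj, Finset.mem_univ j⟩, h⟩

lemma le_supErase {k : ℕ} (hk : 2 ≤ k) (g : Fin k → ℝ) {ℓ j : Fin k} (hj : j ≠ ℓ) :
    g j ≤ supErase hk g ℓ :=
  Finset.le_sup' g (Finset.mem_erase.mpr ⟨hj, Finset.mem_univ j⟩)

lemma supErase_le {k : ℕ} (hk : 2 ≤ k) (g : Fin k → ℝ) (ℓ : Fin k) {c : ℝ}
    (h : ∀ j, j ≠ ℓ → g j ≤ c) : supErase hk g ℓ ≤ c :=
  Finset.sup'_le _ _ (fun j hj => h j (Finset.mem_erase.mp hj).1)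

lemma exists_supErase_eq {k : ℕ} (hk : 2 ≤ k) (g : Fin k → ℝ) (ℓ : Fin k) :
    ∃ q, q ≠ ℓ ∧ supErase hk g ℓ = g q := by
  obtain ⟨q, hq, h⟩ := Finset.exists_mem_eq_sup' (erase_univ_nonempty hk ℓ) g
  exact ⟨q, (Finset.mem_erase.mp hq).1, h⟩

noncomputable def alphaF {V : Type*} (x : V → ℝ) (e : Finset V) : ℝ :=
  if h : e.Nonempty then e.sup' h x else 0

noncomputable def betaF {V : Type*} (x : V → ℝ) (e : Finset V) : ℝ :=
  if h : e.Nonempty then e.inf' h x else 0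

lemma le_alphaF {V : Type*} (x : V → ℝ) {e : Finset V} {v : V} (hv : v ∈ e) :
    x v ≤ alphaF x e := by
  rw [alphaF, dif_pos ⟨v, hv⟩]
  exact Finset.le_sup' x hv

lemma alphaF_lt_iff {V : Type*} (x : V → ℝ) {e : Finset V} (h : e.Nonempty) {θ : ℝ} :
    alphaF x e < θ ↔ ∀ v ∈ e, x v < θ := by
  rw [alphaF, dif_pos h, Finset.sup'_lt_iff]

lemma alphaF_le {V : Type*} (x : V → ℝ) {e : Finset V} (h : e.Nonempty) {c : ℝ}
    (hc : ∀ v ∈ e, x v ≤ c) : alphaF x e ≤ c := by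
  rw [alphaF, dif_pos h]
  exact Finset.sup'_le _ _ hc

lemma exists_alphaF_eq {V : Type*} (x : V → ℝ) {e : Finset V} (h : e.Nonempty) :
    ∃ v ∈ e, alphaF x e = x v := by
  rw [alphaF, dif_pos h]
  exact Finset.exists_mem_eq_sup' h x

lemma betaF_le {V : Type*} (x : V → ℝ) {e : Finset V} {v : V} (hv : v ∈ e) :
    betaF x e ≤ x v := by
  rw [betaF, dif_pos ⟨v, hv⟩]
  exact Finset.inf'_le x hv

lemma le_betaF_iff {V : Type*} (x : V → ℝ) {e : Finset V} (h : e.Nonempty) {θ : ℝ} :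
    θ ≤ betaF x e ↔ ∀ v ∈ e, θ ≤ x v := by
  rw [betaF, dif_pos h, Finset.le_inf'_iff]

lemma le_betaF {V : Type*} (x : V → ℝ) {e : Finset V} (h : e.Nonempty) {c : ℝ}
    (hc : ∀ v ∈ e, c ≤ x v) : c ≤ betaF x e :=
  (le_betaF_iff x h).mpr hc

end Helpers

theorem hg_mwc_main_aux
    {V : Type*} [Fintype V] [DecidableEq V]
    (E : Finset (Finset V)) (hE : ∀ e ∈ E, e.Nonempty)
    (w : Finset V → ℝ) (hw : ∀ e, 0 ≤ w e)
    (r : Finset V → V) (hr : ∀ e ∈ E, r e ∈ e)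
    (k : ℕ) (hk : 2 ≤ k) (s : Fin k → V)
    (x : V → Fin k → ℝ)
    (hx01 : ∀ v i, x v i ∈ Set.Icc (0:ℝ) 1)
    (hxsum : ∀ v, ∑ i, x v i = 1)
    (hterm : ∀ i, x (s i) i = 1) :
    ∃ A : Fin k → Finset V,
      (∀ i j, i ≠ j → Disjoint (A i) (A j)) ∧
      (Finset.univ.biUnion A = Finset.univ) ∧
      (∀ i, s i ∈ A i) ∧
      ((∑ e ∈ E.filter (fun e => ¬ ∃ j : Fin k, e ⊆ A j), w e)
        ≤ 2 * (1 - 1 / (k : ℝ)) * ∑ i, lovasz (hypergraphSep E w r) (fun v => x v i)) := by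
  classical
  have hx0 : ∀ v i, 0 ≤ x v i := fun v i => (hx01 v i).1
  have hx1 : ∀ v i, x v i ≤ 1 := fun v i => (hx01 v i).2
  have hkR : (2:ℝ) ≤ (k:ℝ) := by exact_mod_cast hk
  have hk0 : (k:ℝ) ≠ 0 := by positivity
  obtain ⟨α, hα⟩ : ∃ α : Finset V → Fin k → ℝ,
      ∀ e j, α e j = alphaF (fun v => x v j) e := ⟨_, fun _ _ => rfl⟩
  obtain ⟨β, hβ⟩ : ∃ β : Finset V → Fin k → ℝ,
      ∀ e j, β e j = betaF (fun v => x v j) e := ⟨_, fun _ _ => rfl⟩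
  obtain ⟨a, ha⟩ : ∃ a : Finset V → Fin k → ℝ,
      ∀ e ℓ, a e ℓ = supErase hk (α e) ℓ := ⟨_, fun _ _ => rfl⟩
  obtain ⟨b, hb⟩ : ∃ b : Finset V → Fin k → ℝ,
      ∀ e ℓ, b e ℓ = supErase hk (β e) ℓ := ⟨_, fun _ _ => rfl⟩
  obtain ⟨A, hA⟩ : ∃ A : ℝ → Fin k → Fin k → Finset V, ∀ θ ℓ j, A θ ℓ j =
      if j = ℓ then Finset.univ.filter (fun v => ∀ i, i ≠ ℓ → x v i < θ)
      else Finset.univ.filter (fun v => θ ≤ x v j) := ⟨_, fun _ _ _ => rfl⟩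
  -- basic bounds
  have hβ0 : ∀ e ∈ E, ∀ j, 0 ≤ β e j := by
    intro e he j
    rw [hβ]
    exact le_betaF _ (hE e he) (fun v _ => hx0 v j)
  have ha1 : ∀ e ∈ E, ∀ ℓ, a e ℓ ≤ 1 := by
    intro e he ℓ
    rw [ha]
    refine supErase_le hk _ ℓ (fun j _ => ?_)
    rw [hα]
    exact alphaF_le _ (hE e he) (fun v _ => hx1 v j)
  -- membership characterization
  have hmem : ∀ (θ : ℝ) (ℓ : Fin k), ∀ e ∈ E,
      ((¬ ∃ j, e ⊆ A θ ℓ j) ↔ θ ∈ Set.Ioc (b e ℓ) (a e ℓ)) := by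
    intro θ ℓ e he
    have hne := hE e he
    have hEx : (∃ j, e ⊆ A θ ℓ j) ↔ (θ ≤ b e ℓ ∨ a e ℓ < θ) := by
      constructor
      · rintro ⟨j, hj⟩
        by_cases hjl : j = ℓ
        · subst hjl
          right
          rw [ha, supErase_lt_iff]
          intro i hi
          rw [hα, alphaF_lt_iff _ hne]
          intro v hv
          have hvm := hj hv
          rw [hA, if_pos rfl, Finset.mem_filter] at hvm
          exact hvm.2 i hi
        · left
          rw [hb]
          refine le_trans ?_ (le_supErase hk _ hjl)
          rw [hβ, le_betaF_iff _ hne]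
          intro v hv
          have hvm := hj hv
          rw [hA, if_neg hjl, Finset.mem_filter] at hvm
          exact hvm.2
      · rintro (h | h)
        · rw [hb, le_supErase_iff] at h
          obtain ⟨j, hjl, hj⟩ := h
          refine ⟨j, fun v hv => ?_⟩
          rw [hA, if_neg hjl, Finset.mem_filter]
          refine ⟨Finset.mem_univ v, ?_⟩
          rw [hβ] at hj
          exact le_trans hj (betaF_le _ hv)
        · refine ⟨ℓ, fun v hv => ?_⟩
          rw [hA, if_pos rfl, Finset.mem_filter]
          refine ⟨Finset.mem_univ v, fun i hi => ?_⟩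
          calc x v i ≤ α e i := by rw [hα]; exact le_alphaF (fun u => x u i) hv
            _ ≤ a e ℓ := by rw [ha]; exact le_supErase hk _ hi
            _ < θ := h
    rw [Set.mem_Ioc, hEx, not_or, not_le, not_lt]
  -- cut cost as sum of indicators
  have hcut : ∀ (θ : ℝ) (ℓ : Fin k),
      (∑ e ∈ E.filter (fun e => ¬ ∃ j, e ⊆ A θ ℓ j), w e)
      = ∑ e ∈ E, (Set.Ioc (b e ℓ) (a e ℓ)).indicator (fun _ => w e) θ := by
    intro θ ℓ
    rw [Finset.sum_filter]
    refine Finset.sum_congr rfl (fun e he => ?_)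
    rw [Set.indicator_apply]
    exact if_congr (hmem θ ℓ e he) rfl rfl
  -- Lovász extension computation
  have hlov : ∀ i, lovasz (hypergraphSep E w r) (fun v => x v i)
      = ∑ e ∈ E, w e * (x (r e) i - β e i) := by
    intro i
    have hptw : ∀ θ : ℝ,
        hypergraphSep E w r (Finset.univ.filter (fun v => θ ≤ x v i))
        = ∑ e ∈ E, (Set.Ioc (β e i) (x (r e) i)).indicator (fun _ => w e) θ := by
      intro θ
      rw [hypergraphSep, Finset.sum_filter]
      refine Finset.sum_congr rfl (fun e he => ?_)
      have hne := hE e he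
      have h1 : (r e ∈ Finset.univ.filter (fun v => θ ≤ x v i)) ↔ θ ≤ x (r e) i := by
        simp
      have h2 : (e ⊆ Finset.univ.filter (fun v => θ ≤ x v i)) ↔ θ ≤ β e i := by
        rw [hβ, le_betaF_iff _ hne]
        simp [Finset.subset_iff]
      have hiff : (r e ∈ Finset.univ.filter (fun v => θ ≤ x v i)
          ∧ ¬ e ⊆ Finset.univ.filter (fun v => θ ≤ x v i))
          ↔ θ ∈ Set.Ioc (β e i) (x (r e) i) := by
        rw [Set.mem_Ioc, h1, h2, not_le, and_comm]
      rw [Set.indicator_apply]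
      exact if_congr hiff rfl rfl
    rw [lovasz]
    simp only [hptw]
    rw [intervalIntegral.integral_finset_sum
      (fun e _ => indIoc_intervalIntegrable _ _ _ _ _)]
    refine Finset.sum_congr rfl (fun e he => ?_)
    rw [intIndIoc _ _ _ _ _ (by norm_num : (0:ℝ) ≤ 1)]
    rw [min_eq_left (hx1 (r e) i), max_eq_left (hβ0 e he i)]
    rw [max_eq_right, mul_comm]
    have hre : β e i ≤ x (r e) i := by
      rw [hβ]; exact betaF_le _ (hr e he)
    linarith
  have hlovsum : ∑ i, lovasz (hypergraphSep E w r) (fun v => x v i)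
      = ∑ e ∈ E, w e * (1 - ∑ j, β e j) := by
    simp only [hlov]
    rw [Finset.sum_comm]
    refine Finset.sum_congr rfl (fun e he => ?_)
    rw [← Finset.mul_sum]
    congr 1
    rw [Finset.sum_sub_distrib, hxsum (r e)]
  -- integral of cut cost
  have hint : ∀ ℓ : Fin k,
      (∫ θ in (2⁻¹:ℝ)..1, ∑ e ∈ E, (Set.Ioc (b e ℓ) (a e ℓ)).indicator (fun _ => w e) θ)
      = ∑ e ∈ E, max 0 (a e ℓ - max (b e ℓ) 2⁻¹) * w e := by
    intro ℓ
    rw [intervalIntegral.integral_finset_sum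
      (fun e _ => indIoc_intervalIntegrable _ _ _ _ _)]
    refine Finset.sum_congr rfl (fun e he => ?_)
    rw [intIndIoc _ _ _ _ _ (by norm_num : (2⁻¹:ℝ) ≤ 1)]
    rw [min_eq_left (ha1 e he ℓ)]
  -- per-edge inequality
  have hS4 : ∀ e ∈ E, (∑ ℓ, max 0 (a e ℓ - max (b e ℓ) 2⁻¹))
      ≤ ((k:ℝ) - 1) * (1 - ∑ j, β e j) := by
    intro e he
    have hne := hE e he
    obtain ⟨v₀, hv₀⟩ := hne
    have hβx : ∀ j v, v ∈ e → β e j ≤ x v j := by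
      intro j v hv; rw [hβ]; exact betaF_le _ hv
    apply core_ineq hk (β e) (a e) (b e)
    · have h1 : ∑ j, β e j ≤ ∑ j, x v₀ j :=
        Finset.sum_le_sum (fun j _ => hβx j v₀ hv₀)
      rw [hxsum v₀] at h1
      linarith
    · exact hβ0 e he
    · ring_nf
      exact le_refl _
    · intro ℓ
      rw [ha]
      refine supErase_le hk _ ℓ (fun j hj => ?_)
      rw [hα]
      obtain ⟨v, hv, hveq⟩ := exists_alphaF_eq (fun v => x v j) (hE e he)
      rw [hveq]
      have h1 : ∑ i ∈ Finset.univ.erase j, β e i ≤ ∑ i ∈ Finset.univ.erase j, x v i :=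
        Finset.sum_le_sum (fun i _ => hβx i v hv)
      have h2 : x v j + ∑ i ∈ Finset.univ.erase j, x v i = 1 := by
        rw [Finset.add_sum_erase _ _ (Finset.mem_univ j)]
        exact hxsum v
      have h3 : β e j + ∑ i ∈ Finset.univ.erase j, β e i = ∑ i, β e i :=
        Finset.add_sum_erase _ _ (Finset.mem_univ j)
      have h4 : β e j ≤ b e ℓ := by
        rw [hb]; exact le_supErase hk _ hj
      linarith
    · intro ℓ
      rw [hb]
      obtain ⟨q, hq, heq⟩ := exists_supErase_eq hk (β e) ℓ
      exact ⟨q, hq, le_of_eq heq⟩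
  -- averaging over ℓ
  have havg : ∑ ℓ, (∫ θ in (2⁻¹:ℝ)..1,
        ∑ e ∈ E, (Set.Ioc (b e ℓ) (a e ℓ)).indicator (fun _ => w e) θ)
      ≤ ((k:ℝ) - 1) * (∑ i, lovasz (hypergraphSep E w r) (fun v => x v i)) := by
    rw [hlovsum]
    simp only [hint]
    rw [Finset.sum_comm]
    rw [Finset.mul_sum]
    refine Finset.sum_le_sum (fun e he => ?_)
    rw [← Finset.sum_mul]
    calc (∑ ℓ, max 0 (a e ℓ - max (b e ℓ) 2⁻¹)) * w e
        ≤ (((k:ℝ) - 1) * (1 - ∑ j, β e j)) * w e :=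
          mul_le_mul_of_nonneg_right (hS4 e he) (hw e)
      _ = ((k:ℝ) - 1) * (w e * (1 - ∑ j, β e j)) := by ring
  obtain ⟨ℓ, -, hℓ⟩ : ∃ ℓ ∈ Finset.univ, (∫ θ in (2⁻¹:ℝ)..1,
      ∑ e ∈ E, (Set.Ioc (b e ℓ) (a e ℓ)).indicator (fun _ => w e) θ)
      ≤ ((k:ℝ) - 1) / k * (∑ i, lovasz (hypergraphSep E w r) (fun v => x v i)) := by
    apply Finset.exists_le_of_sum_le ⟨⟨0, by omega⟩, Finset.mem_univ _⟩
    calc ∑ ℓ, (∫ θ in (2⁻¹:ℝ)..1,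
          ∑ e ∈ E, (Set.Ioc (b e ℓ) (a e ℓ)).indicator (fun _ => w e) θ)
        ≤ ((k:ℝ) - 1) * (∑ i, lovasz (hypergraphSep E w r) (fun v => x v i)) := havg
      _ = ∑ _ℓ : Fin k, ((k:ℝ) - 1) / k * (∑ i, lovasz (hypergraphSep E w r) (fun v => x v i)) := by
          rw [Finset.sum_const, Finset.card_univ, Fintype.card_fin, nsmul_eq_mul]
          field_simp
  -- choose θ
  have hθex : ∃ θ ∈ Set.Ioc (2⁻¹:ℝ) 1,
      (∑ e ∈ E.filter (fun e => ¬ ∃ j, e ⊆ A θ ℓ j), w e)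
        ≤ 2 * (1 - 1 / (k:ℝ)) * (∑ i, lovasz (hypergraphSep E w r) (fun v => x v i)) := by
    by_contra hcon
    set R := 2 * (1 - 1 / (k:ℝ)) * (∑ i, lovasz (hypergraphSep E w r) (fun v => x v i)) with hR
    have hcon' : ∀ θ ∈ Set.Ioc (2⁻¹:ℝ) 1,
        R < ∑ e ∈ E.filter (fun e => ¬ ∃ j, e ⊆ A θ ℓ j), w e := by
      intro θ hθ
      by_contra h
      exact hcon ⟨θ, hθ, not_lt.mp h⟩
    set Vals := E.powerset.image (fun t => ∑ e ∈ t, w e) with hVals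
    have hmemVals : ∀ θ : ℝ,
        (∑ e ∈ E.filter (fun e => ¬ ∃ j, e ⊆ A θ ℓ j), w e) ∈ Vals := by
      intro θ
      exact Finset.mem_image.mpr ⟨_, Finset.mem_powerset.mpr (Finset.filter_subset _ _), rfl⟩
    set S' := Vals.filter (fun c => R < c) with hS'
    have h1mem : (1:ℝ) ∈ Set.Ioc (2⁻¹:ℝ) 1 := by constructor <;> norm_num
    have hS'ne : S'.Nonempty :=
      ⟨_, Finset.mem_filter.mpr ⟨hmemVals 1, hcon' 1 h1mem⟩⟩
    set R₀ := S'.min' hS'ne with hR₀def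
    have hR₀ : R < R₀ := (Finset.mem_filter.mp (S'.min'_mem hS'ne)).2
    have hlb : ∀ θ ∈ Set.Ioc (2⁻¹:ℝ) 1,
        R₀ ≤ ∑ e ∈ E, (Set.Ioc (b e ℓ) (a e ℓ)).indicator (fun _ => w e) θ := by
      intro θ hθ
      rw [← hcut θ ℓ]
      exact Finset.min'_le _ _ (Finset.mem_filter.mpr ⟨hmemVals θ, hcon' θ hθ⟩)
    have hIntF : MeasureTheory.IntegrableOn
        (fun θ => ∑ e ∈ E, (Set.Ioc (b e ℓ) (a e ℓ)).indicator (fun _ => w e) θ)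
        (Set.Ioc (2⁻¹:ℝ) 1) volume := by
      apply MeasureTheory.Integrable.integrableOn
      exact MeasureTheory.integrable_finset_sum _ (fun e _ => indIoc_integrable _ _ _)
    have hmono : R₀ * 2⁻¹
        ≤ ∫ θ in Set.Ioc (2⁻¹:ℝ) 1,
            ∑ e ∈ E, (Set.Ioc (b e ℓ) (a e ℓ)).indicator (fun _ => w e) θ := by
      have h := MeasureTheory.setIntegral_mono_on
        (integrableOn_const measure_Ioc_lt_top.ne) hIntF measurableSet_Ioc hlb
      rw [setIntegral_const, Real.volume_real_Ioc, smul_eq_mul] at h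
      rw [max_eq_left (by norm_num : (0:ℝ) ≤ 1 - 2⁻¹)] at h
      calc R₀ * 2⁻¹ = (1 - 2⁻¹) * R₀ := by ring
        _ ≤ _ := h
    have heqI : (∫ θ in Set.Ioc (2⁻¹:ℝ) 1,
          ∑ e ∈ E, (Set.Ioc (b e ℓ) (a e ℓ)).indicator (fun _ => w e) θ)
        = ∫ θ in (2⁻¹:ℝ)..1,
          ∑ e ∈ E, (Set.Ioc (b e ℓ) (a e ℓ)).indicator (fun _ => w e) θ := by
      rw [intervalIntegral.integral_of_le (by norm_num : (2⁻¹:ℝ) ≤ 1)]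
    have hRhalf : ((k:ℝ) - 1) / k * (∑ i, lovasz (hypergraphSep E w r) (fun v => x v i)) = R * 2⁻¹ := by
      rw [hR]
      field_simp
    rw [heqI] at hmono
    have : R₀ * 2⁻¹ ≤ R * 2⁻¹ := by
      calc R₀ * 2⁻¹ ≤ _ := hmono
        _ ≤ ((k:ℝ) - 1) / k * (∑ i, lovasz (hypergraphSep E w r) (fun v => x v i)) := hℓ
        _ = R * 2⁻¹ := hRhalf
    linarith
  obtain ⟨θ, hθI, hθle⟩ := hθex
  obtain ⟨hθhalf, hθ1⟩ := hθI
  refine ⟨A θ ℓ, ?_, ?_, ?_, hθle⟩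
  · -- disjointness
    intro i j hij
    rw [Finset.disjoint_left]
    intro v hvi hvj
    by_cases hiℓ : i = ℓ
    · have hjℓ : j ≠ ℓ := fun h => hij (hiℓ.trans h.symm)
      rw [hA, if_pos hiℓ, Finset.mem_filter] at hvi
      rw [hA, if_neg hjℓ, Finset.mem_filter] at hvj
      exact absurd hvj.2 (not_le.mpr (hvi.2 j hjℓ))
    · by_cases hjℓ : j = ℓ
      · rw [hA, if_pos hjℓ, Finset.mem_filter] at hvj
        rw [hA, if_neg hiℓ, Finset.mem_filter] at hvi
        exact absurd hvi.2 (not_le.mpr (hvj.2 i hiℓ))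
      · rw [hA, if_neg hiℓ, Finset.mem_filter] at hvi
        rw [hA, if_neg hjℓ, Finset.mem_filter] at hvj
        have hpair : x v i + x v j ≤ 1 := by
          have h := Finset.sum_le_sum_of_subset_of_nonneg
            (Finset.subset_univ ({i, j} : Finset (Fin k))) (fun m _ _ => hx0 v m)
          rw [Finset.sum_pair hij, hxsum v] at h
          exact h
        have := hvi.2
        have := hvj.2
        linarith
  · -- cover
    apply Finset.eq_univ_iff_forall.mpr
    intro v
    rw [Finset.mem_biUnion]
    by_cases hv : ∃ j, j ≠ ℓ ∧ θ ≤ x v j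
    · obtain ⟨j, hjℓ, hj⟩ := hv
      refine ⟨j, Finset.mem_univ j, ?_⟩
      rw [hA, if_neg hjℓ, Finset.mem_filter]
      exact ⟨Finset.mem_univ v, hj⟩
    · push_neg at hv
      refine ⟨ℓ, Finset.mem_univ ℓ, ?_⟩
      rw [hA, if_pos rfl, Finset.mem_filter]
      exact ⟨Finset.mem_univ v, fun i hi => hv i hi⟩
  · -- terminals
    intro i
    by_cases hiℓ : i = ℓ
    · rw [hA, if_pos hiℓ, Finset.mem_filter]
      refine ⟨Finset.mem_univ _, fun j hj => ?_⟩
      have hj' : j ≠ i := fun h => hj (h.trans hiℓ)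
      have hzero : x (s i) j = 0 := by
        have h2 : x (s i) i + ∑ m ∈ Finset.univ.erase i, x (s i) m = 1 := by
          rw [Finset.add_sum_erase _ _ (Finset.mem_univ i)]
          exact hxsum (s i)
        rw [hterm i] at h2
        have h3 : ∑ m ∈ Finset.univ.erase i, x (s i) m = 0 := by linarith
        have h4 := (Finset.sum_eq_zero_iff_of_nonneg
          (fun m _ => hx0 (s i) m)).mp h3
        exact h4 j (Finset.mem_erase.mpr ⟨hj', Finset.mem_univ j⟩)
      rw [hzero]
      linarith
    · rw [hA, if_neg hiℓ, Finset.mem_filter]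
      refine ⟨Finset.mem_univ _, ?_⟩
      rw [hterm i]
      exact hθ1

theorem hypergraph_multiway_cut_integrality_gap
    {V : Type*} [Fintype V] [DecidableEq V]
    (E : Finset (Finset V)) (hE : ∀ e ∈ E, e.Nonempty)
    (w : Finset V → ℝ) (hw : ∀ e, 0 ≤ w e)
    (r : Finset V → V) (hr : ∀ e ∈ E, r e ∈ e)
    (k : ℕ) (s : Fin k → V) (hs : Function.Injective s)
    (x : V → Fin k → ℝ)
    (hx01 : ∀ v i, x v i ∈ Set.Icc (0:ℝ) 1)
    (hxsum : ∀ v, ∑ i, x v i = 1)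
    (hterm : ∀ i, x (s i) i = 1) :
    ∃ A : Fin k → Finset V,
      (∀ i j, i ≠ j → Disjoint (A i) (A j)) ∧
      (Finset.univ.biUnion A = Finset.univ) ∧
      (∀ i, s i ∈ A i) ∧
      ((∑ e ∈ E.filter (fun e => ¬ ∃ j : Fin k, e ⊆ A j), w e)
        ≤ 2 * (1 - 1 / (k : ℝ)) * ∑ i, lovasz (hypergraphSep E w r) (fun v => x v i)) := by
  rcases lt_or_ge k 2 with hk | hk
  · interval_cases k
    · -- k = 0
      haveI hVempty : IsEmpty V := by
        refine ⟨fun v => ?_⟩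
        have := hxsum v
        simp at this
      have hEempty : E = ∅ := by
        rw [Finset.eq_empty_iff_forall_notMem]
        intro e he
        obtain ⟨v, -⟩ := hE e he
        exact hVempty.elim v
      refine ⟨fun i => i.elim0, fun i => i.elim0, ?_, fun i => i.elim0, ?_⟩
      · simp [Finset.univ_eq_empty]
      · rw [hEempty]
        simp
    · -- k = 1
      refine ⟨fun _ => Finset.univ, ?_, ?_, fun i => Finset.mem_univ _, ?_⟩
      · intro i j hij
        exact absurd (Subsingleton.elim i j) hij
      · apply Finset.eq_univ_iff_forall.mpr
        intro v
        exact Finset.mem_biUnion.mpr ⟨0, Finset.mem_univ _, Finset.mem_univ _⟩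
      · have hfilter : E.filter (fun e => ¬ ∃ j : Fin 1, e ⊆ Finset.univ) = ∅ := by
          apply Finset.filter_eq_empty_iff.mpr
          intro e _
          exact not_not.mpr ⟨0, Finset.subset_univ e⟩
        rw [hfilter]
        norm_num
  · exact hg_mwc_main_aux E hE w hw r hr k hk s x hx01 hxsum hterm
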